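/- Let A be a periodic (torsion) abelian group. Then every unimodular system of equations over A is solvable in A itself if and only if the reduced part of A has bounded exponent. Precisely: writing A = C ⊕ D with D divisible and C reduced, the following are equivalent: (1) for every family {m_i} in a free abelian group M = ⊕_j ℤ·x_j whose mod-q reductions are ℤ/q-independent for all primes q, and every family {a_i} in A, there is a homomorphism f : M → A with f(m_i) = a_i for all i; (2) there exists N ≥ 1 with N·c = 0 for all c ∈ C. -/

import Mathlib

/-- Reduction modulo `q` of an element of the free abelian group `J →₀ ℤ`. -/
noncomputable def modRed (q : ℕ) {J : Type*} (v : J →₀ ℤ) : J →₀ ZMod q :=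
  Finsupp.mapRange (Int.cast : ℤ → ZMod q) (by simp) v

section ModRedLemmas

variable (q : ℕ) {J : Type*}

lemma modRed_apply (v : J →₀ ℤ) (j : J) : modRed q v j = ((v j : ℤ) : ZMod q) :=
  Finsupp.mapRange_apply

lemma modRed_add (v w : J →₀ ℤ) : modRed q (v + w) = modRed q v + modRed q w := by
  ext j; simp [modRed_apply]

lemma modRed_zero : modRed q (0 : J →₀ ℤ) = 0 := by
  ext j; simp [modRed_apply]

lemma modRed_smul (z : ℤ) (v : J →₀ ℤ) :
    modRed q (z • v) = (z : ZMod q) • modRed q v := by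
  ext j
  simp only [modRed_apply, Finsupp.smul_apply, smul_eq_mul]
  push_cast
  ring

lemma modRed_single (j : J) (z : ℤ) :
    modRed q (Finsupp.single j z) = Finsupp.single j (z : ZMod q) :=
  Finsupp.mapRange_single

lemma modRed_linearCombination {ι : Type*} (m : ι → (J →₀ ℤ)) (l : ι →₀ ℤ) :
    modRed q (Finsupp.linearCombination ℤ m l)
      = Finsupp.linearCombination (ZMod q) (fun i => modRed q (m i))
          (Finsupp.mapRange (Int.cast : ℤ → ZMod q) (by simp) l) := by
  induction l using Finsupp.induction_linear with
  | zero => simp [modRed_zero]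
  | add f g hf hg =>
      rw [Finsupp.mapRange_add (by push_cast; simp)]
      simp only [map_add, modRed_add, hf, hg]
  | single a b =>
      rw [Finsupp.mapRange_single]
      simp [Finsupp.linearCombination_single, modRed_smul]

end ModRedLemmas

/-- mod-q independence for all primes implies integral independence. -/
lemma zIndep {ι J : Type*} (m : ι → (J →₀ ℤ))
    (hm : ∀ q : ℕ, q.Prime → LinearIndependent (ZMod q) fun i => modRed q (m i)) :
    LinearIndependent ℤ m := by
  rw [linearIndependent_iff]
  intro l hl
  by_contra hne
  obtain ⟨i₀, hi₀⟩ : ∃ i, l i ≠ 0 := by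
    by_contra hc
    push_neg at hc
    exact hne (Finsupp.ext hc)
  obtain ⟨q, hql, hq⟩ := Nat.exists_infinite_primes ((l i₀).natAbs + 1)
  have h1 := hm q hq
  rw [linearIndependent_iff] at h1
  have h2 : (Finsupp.mapRange (Int.cast : ℤ → ZMod q) (by simp) l) = 0 := by
    apply h1
    rw [← modRed_linearCombination, hl, modRed_zero]
  have h3 : ((l i₀ : ℤ) : ZMod q) = 0 := by
    have := DFunLike.congr_fun h2 i₀
    simpa [Finsupp.mapRange_apply] using this
  rw [ZMod.intCast_zmod_eq_zero_iff_dvd] at h3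
  have h4 : q ∣ (l i₀).natAbs := by
    have := Int.natAbs_dvd_natAbs.mpr h3
    simpa using this
  have h5 := Nat.le_of_dvd (Int.natAbs_pos.mpr hi₀) h4
  omega

/-- the "chain" family is linearly independent over any commutative ring. -/
lemma chainIndep {R : Type*} [CommRing R] (n : ℕ → R) :
    LinearIndependent R
      (fun k : ℕ => (Finsupp.single k 1 - Finsupp.single (k + 1) (n k) : ℕ →₀ R)) := by
  rw [linearIndependent_iff']
  intro s g hsum
  have he : ∀ c : ℕ,
      (∑ i ∈ s, (if i = c then g i else 0))
        - (∑ i ∈ s, (if i + 1 = c then g i * n i else 0)) = 0 := by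
    intro c
    have h0 := DFunLike.congr_fun hsum c
    rw [Finset.sum_apply'] at h0
    have h1 : ∀ i ∈ s,
        (g i • (Finsupp.single i (1:R) - Finsupp.single (i + 1) (n i))) c
          = (if i = c then g i else 0) - (if i + 1 = c then g i * n i else 0) := by
      intro i _
      simp [Finsupp.single_apply, mul_sub, mul_ite]
    rw [Finset.sum_congr rfl h1, Finset.sum_sub_distrib] at h0
    simpa using h0
  have key : ∀ k, k ∈ s → g k = 0 := by
    intro k
    induction k with
    | zero =>
        intro h0
        have := he 0
        rw [Finset.sum_ite_eq' s 0 g] at this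
        simp [h0] at this
        exact this
    | succ k ih =>
        intro hk
        have h2 := he (k + 1)
        rw [Finset.sum_ite_eq' s (k+1) g] at h2
        have h3 : (∑ i ∈ s, (if i + 1 = k + 1 then g i * n i else 0))
            = ∑ i ∈ s, (if i = k then g i * n i else 0) := by
          apply Finset.sum_congr rfl
          intro i _
          congr 1
          simp
        rw [h3, Finset.sum_ite_eq' s k (fun i => g i * n i)] at h2
        by_cases hks : k ∈ s
        · rw [ih hks] at h2
          simpa [hk, hks] using h2
        · simpa [hk, hks] using h2
  exact fun i hi => key i hi

/-- If all prime factors of `M` lie in `s` (a set of primes) and all multiplicities are at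
most `E`, then `M` divides `(∏ s)^E`. -/
lemma dvd_prod_pow (s : Finset ℕ) (hs : ∀ p ∈ s, p.Prime) {M : ℕ} (E : ℕ) (hM : M ≠ 0)
    (h1 : ∀ p, p.Prime → p ∣ M → p ∈ s) (h2 : ∀ p, M.factorization p ≤ E) :
    M ∣ (∏ p ∈ s, p) ^ E := by
  have hr0 : (∏ p ∈ s, p) ≠ 0 :=
    Finset.prod_ne_zero_iff.mpr fun p hp => (hs p hp).pos.ne'
  rw [← Nat.factorization_le_iff_dvd hM (pow_ne_zero _ hr0)]
  rw [Finsupp.le_def]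
  intro p
  rw [Nat.factorization_pow]
  by_cases hp : p.Prime ∧ p ∣ M
  · have hps : p ∈ s := h1 p hp.1 hp.2
    have hpos : 1 ≤ (∏ q ∈ s, q).factorization p :=
      hp.1.factorization_pos_of_dvd hr0 (Finset.dvd_prod_of_mem _ hps)
    calc M.factorization p ≤ E := h2 p
      _ = E * 1 := (mul_one E).symm
      _ ≤ E * (∏ q ∈ s, q).factorization p := Nat.mul_le_mul_left E hpos
      _ = (E • (∏ q ∈ s, q).factorization) p := by
          simp [Finsupp.smul_apply]
  · have hz : M.factorization p = 0 := by
      rcases not_and_or.mp hp with h | h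
      · exact Nat.factorization_eq_zero_of_not_prime M h
      · exact Nat.factorization_eq_zero_of_not_dvd h
    simp [hz]

lemma nat_dvd_radical_pow {N : ℕ} (hN : N ≠ 0) :
    N ∣ (∏ p ∈ N.primeFactors, p) ^ N := by
  apply dvd_prod_pow _ (fun p hp => Nat.prime_of_mem_primeFactors hp) N hN
  · intro p hp hpd
    exact Nat.mem_primeFactors.mpr ⟨hp, hpd, hN⟩
  · intro p
    exact (Nat.factorization_lt p hN).le

lemma coprime_smul_kill {G : Type*} [AddCommGroup G] {g : G} {m n : ℕ}
    (hco : Nat.Coprime m n) (hm : m • g = 0) (hn : n • g = 0) : g = 0 := by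
  have hb := Nat.gcd_eq_gcd_ab m n
  rw [hco, Nat.cast_one] at hb
  have h1 : (1 : ℤ) • g = 0 := by
    rw [hb, add_zsmul, mul_comm (m:ℤ), mul_comm (n:ℤ), mul_zsmul, mul_zsmul,
      natCast_zsmul, natCast_zsmul, hm, hn, smul_zero, smul_zero, add_zero]
  simpa using h1

/-- Bezout inverse: if `n • g = 0` and `gcd m n = 1` then `g` is divisible by `m`
within every subgroup containing `g`, witnessed by an integer multiple of `g`. -/
lemma coprime_smul_div {G : Type*} [AddCommGroup G] {g : G} {m n : ℕ}
    (hco : Nat.Coprime m n) (hn : n • g = 0) : ∃ u : ℤ, m • (u • g) = g := by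
  refine ⟨m.gcdA n, ?_⟩
  have hb := Nat.gcd_eq_gcd_ab m n
  rw [hco, Nat.cast_one] at hb
  have h2 : ((m:ℤ) * m.gcdA n) • g = g := by
    have he : ((m:ℤ) * m.gcdA n) = 1 - (n:ℤ) * m.gcdB n := by linarith [hb]
    rw [he, sub_zsmul, one_zsmul, mul_comm, mul_zsmul, natCast_zsmul, hn, smul_zero]
    abel
  rw [← natCast_zsmul (m.gcdA n • g) m, smul_smul]
  exact h2

/-- The subgroup of elements annihilated by some power of `p`. -/
def pTors (G : Type*) [AddCommGroup G] (p : ℕ) : AddSubgroup G where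
  carrier := {g | ∃ j : ℕ, p ^ j • g = 0}
  zero_mem' := ⟨0, by simp⟩
  add_mem' := by
    rintro a b ⟨j, hj⟩ ⟨k, hk⟩
    refine ⟨j + k, ?_⟩
    have ha' : p ^ (j+k) • a = p ^ k • (p ^ j • a) := by rw [pow_add, mul_comm, mul_smul]
    have hb' : p ^ (j+k) • b = p ^ j • (p ^ k • b) := by rw [pow_add, mul_smul]
    rw [smul_add, ha', hb', hj, hk, smul_zero, smul_zero, add_zero]
  neg_mem' := by
    rintro a ⟨j, hj⟩
    exact ⟨j, by rw [smul_neg, hj, neg_zero]⟩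

lemma mem_pTors {G : Type*} [AddCommGroup G] {p : ℕ} {g : G} :
    g ∈ pTors G p ↔ ∃ j : ℕ, p ^ j • g = 0 := Iff.rfl

lemma pTors_zsmul_mem {G : Type*} [AddCommGroup G] {p : ℕ} {g : G} (hg : g ∈ pTors G p)
    (u : ℤ) : u • g ∈ pTors G p := by
  obtain ⟨j, hj⟩ := hg
  exact ⟨j, by rw [smul_comm, hj, smul_zero]⟩

universe u

lemma modRed_sub (q : ℕ) {J : Type*} (v w : J →₀ ℤ) :
    modRed q (v - w) = modRed q v - modRed q w := by
  ext j; simp [modRed_apply]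

lemma solvable_of_bounded {A : Type u} [AddCommGroup A]
    (C D : AddSubgroup A) (hsup : C ⊔ D = ⊤)
    (hDdiv : ∀ d ∈ D, ∀ n : ℕ, 0 < n → ∃ e ∈ D, n • e = d)
    {N : ℕ} (hN : 1 ≤ N) (hNC : ∀ c ∈ C, N • c = 0)
    (ι J : Type) (m : ι → (J →₀ ℤ))
    (hm : ∀ q : ℕ, q.Prime → LinearIndependent (ZMod q) (fun i => modRed q (m i)))
    (a : ι → A) : ∃ f : (J →₀ ℤ) →+ A, ∀ i, f (m i) = a i := by
  classical
  -- decompose the targets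
  have hdec : ∀ i, ∃ c, c ∈ C ∧ ∃ d, d ∈ D ∧ c + d = a i := by
    intro i
    have : a i ∈ C ⊔ D := by rw [hsup]; trivial
    obtain ⟨y, hy, z, hz, hyz⟩ := AddSubgroup.mem_sup.mp this
    exact ⟨y, hy, z, hz, hyz⟩
  choose c hc d hd hcd using hdec
  ---------------------------------------------------------------- C part
  -- retractions mod p
  have hlam : ∀ p : ℕ, ∃ L : (J →₀ ZMod p) →ₗ[ZMod p] (ι →₀ ZMod p),
      p.Prime → ∀ i, L (modRed p (m i)) = Finsupp.single i 1 := by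
    intro p
    by_cases hp : p.Prime
    · haveI := Fact.mk hp
      have hind := hm p hp
      obtain ⟨Q, hQ⟩ :=
        (Submodule.span (ZMod p) (Set.range fun i => modRed p (m i))).exists_isCompl
      refine ⟨hind.repr.comp (Submodule.projectionOnto _ Q hQ), fun _ i => ?_⟩
      have h1 : (modRed p (m i)) ∈ Submodule.span (ZMod p) (Set.range fun i => modRed p (m i)) :=
        Submodule.subset_span (Set.mem_range_self i)
      have h2 := Submodule.linearProjOfIsCompl_apply_left hQ ⟨modRed p (m i), h1⟩
      simp only [LinearMap.comp_apply]
      rw [show modRed p (m i)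
          = ((⟨modRed p (m i), h1⟩ : Submodule.span (ZMod p)
              (Set.range fun i => modRed p (m i))) : J →₀ ZMod p) from rfl, h2]
      exact hind.repr_eq_single i _ rfl
    · exact ⟨0, fun h => absurd h hp⟩
  choose lam hlamp using hlam
  set P := N.primeFactors with hP
  have hprimeP : ∀ p ∈ P, p.Prime := fun p hp => Nat.prime_of_mem_primeFactors hp
  -- CRT coefficients
  have hbex : ∀ p ∈ P, ∃ b : ℤ, (p:ℤ) ∣ b - 1 ∧ ∀ q ∈ P, q ≠ p → (q:ℤ) ∣ b := by
    intro p hp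
    have hpp := hprimeP p hp
    have hcop : Nat.Coprime p (∏ q ∈ P.erase p, q) := by
      apply Nat.Coprime.prod_right
      intro q hq
      have hqp := hprimeP q (Finset.mem_of_mem_erase hq)
      exact (Nat.coprime_primes hpp hqp).mpr (Ne.symm (Finset.ne_of_mem_erase hq))
    obtain ⟨u, v, huv⟩ := Nat.isCoprime_iff_coprime.mpr hcop
    refine ⟨v * ((∏ q ∈ P.erase p, q : ℕ) : ℤ), ?_, ?_⟩
    · have hh : v * ((∏ q ∈ P.erase p, q : ℕ) : ℤ) - 1 = (-u) * p := by
        push_cast at huv ⊢; linarith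
      rw [hh]
      exact Dvd.intro_left (-u) rfl
    · intro q hq hqne
      have hqmem : q ∈ P.erase p := Finset.mem_erase.mpr ⟨hqne, hq⟩
      have h3 : (q:ℕ) ∣ ∏ q ∈ P.erase p, q := Finset.dvd_prod_of_mem _ hqmem
      exact Dvd.dvd.mul_left (Int.natCast_dvd_natCast.mpr h3) v
  choose bco hb1 hb2 using hbex
  -- the integral lift
  set vj : J → (ι →₀ ℤ) := fun j =>
    ∑ p ∈ P.attach,
      bco p p.2 • Finsupp.mapRange (ZMod.cast : ZMod p → ℤ) (by simp) (lam p (Finsupp.single j 1))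
    with hvj
  set PSI : (J →₀ ℤ) →ₗ[ℤ] (ι →₀ ℤ) := Finsupp.linearCombination ℤ vj with hPSIdef
  have hpsi : ∀ p, p ∈ P → ∀ x : J →₀ ℤ, modRed p (PSI x) = lam p (modRed p x) := by
    intro p hp x
    have hpp := hprimeP p hp
    induction x using Finsupp.induction_linear with
    | zero => rw [map_zero, modRed_zero, modRed_zero, map_zero]
    | add f g hf hg => rw [map_add, modRed_add, modRed_add, map_add, hf, hg]
    | single j z =>
        have hMH : ∀ (s : Finset {x // x ∈ P}) (F : {x // x ∈ P} → (ι →₀ ℤ)),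
            modRed p (∑ q ∈ s, F q) = ∑ q ∈ s, modRed p (F q) := by
          intro s F
          induction s using Finset.induction_on with
          | empty => simp [modRed_zero]
          | insert _ _ hq ih => rw [Finset.sum_insert hq, Finset.sum_insert hq, modRed_add, ih]
        have hkey : modRed p (vj j) = lam p (Finsupp.single j 1) := by
          rw [hvj]
          rw [hMH]
          rw [Finset.sum_eq_single_of_mem (⟨p, hp⟩ : {x // x ∈ P}) (Finset.mem_attach _ _)]
          · -- diagonal term
            rw [modRed_smul]
            have hb1' : ((bco p hp : ℤ) : ZMod p) = 1 := by
              have h5 := hb1 p hp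
              have h6 : ((bco p hp - 1 : ℤ) : ZMod p) = 0 :=
                (ZMod.intCast_zmod_eq_zero_iff_dvd _ _).mpr h5
              push_cast at h6
              linear_combination h6
            rw [hb1']
            rw [one_smul]
            ext k
            rw [modRed_apply, Finsupp.mapRange_apply, ZMod.intCast_zmod_cast]
          · intro q _ hqne
            rw [modRed_smul]
            have hq0 : ((bco q q.2 : ℤ) : ZMod p) = 0 := by
              apply (ZMod.intCast_zmod_eq_zero_iff_dvd _ _).mpr
              exact hb2 q q.2 p hp (fun hh => hqne (Subtype.ext hh.symm))
            rw [hq0, zero_smul]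
        rw [Finsupp.linearCombination_single, modRed_smul, hkey, modRed_single]
        rw [show Finsupp.single j ((z:ℤ) : ZMod p) = ((z:ℤ) : ZMod p) • Finsupp.single j 1 by
          rw [Finsupp.smul_single, smul_eq_mul, mul_one], map_smul]
  -- congruences
  have hmod0 : ∀ i, ∀ p ∈ P, modRed p (PSI (m i) - Finsupp.single i 1) = 0 := by
    intro i p hp
    rw [modRed_sub, hpsi p hp (m i), hlamp p (hprimeP p hp) i, modRed_single]
    norm_num
  have hNne : N ≠ 0 := by omega
  set r : ℕ := ∏ p ∈ P, p with hr
  have hdvd : ∀ (i : ι) (k : ι), (r:ℤ) ∣ (PSI (m i) - Finsupp.single i (1:ℤ)) k := by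
    intro i k
    have h1 : ∀ p ∈ P, ((p:ℕ):ℤ) ∣ (PSI (m i) - Finsupp.single i (1:ℤ)) k := by
      intro p hp
      have h2 := DFunLike.congr_fun (hmod0 i p hp) k
      rw [modRed_apply] at h2
      exact (ZMod.intCast_zmod_eq_zero_iff_dvd _ _).mp h2
    have hpair : (↑P : Set ℕ).Pairwise (Function.onFun IsCoprime fun p => ((p:ℕ):ℤ)) := by
      intro p hp q hq hne
      exact Nat.isCoprime_iff_coprime.mpr
        ((Nat.coprime_primes (hprimeP p hp) (hprimeP q hq)).mpr hne)
    have h3 := Finset.prod_dvd_of_coprime hpair h1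
    rw [hr]
    push_cast
    exact h3
  set t : ι → (ι →₀ ℤ) := fun i =>
    Finsupp.mapRange (fun z => z / (r:ℤ)) (by simp) (PSI (m i) - Finsupp.single i 1) with htdef
  have ht : ∀ i, PSI (m i) = Finsupp.single i 1 + (r:ℤ) • t i := by
    intro i
    ext k
    have h2 : (r:ℤ) * ((PSI (m i) - Finsupp.single i (1:ℤ)) k / (r:ℤ))
        = (PSI (m i)) k - (Finsupp.single i (1:ℤ)) k := by
      rw [Int.mul_ediv_cancel' (hdvd i k), Finsupp.sub_apply]
    have h3 : ((r:ℤ) • t i) k = (r:ℤ) * ((PSI (m i) - Finsupp.single i (1:ℤ)) k / (r:ℤ)) := by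
      rw [Finsupp.smul_apply]
      simp only [htdef, Finsupp.mapRange_apply]
      rw [smul_eq_mul]
    rw [Finsupp.add_apply, h3, h2]
    ring
  -- geometric series correction
  set T : (ι →₀ ℤ) →ₗ[ℤ] (ι →₀ ℤ) := Finsupp.linearCombination ℤ t with hT
  set x : Module.End ℤ (ι →₀ ℤ) := (-(r:ℤ)) • T with hx
  set S : Module.End ℤ (ι →₀ ℤ) := ∑ k ∈ Finset.range N, x ^ k with hS
  have hgeom : S * (1 - x) = 1 - x ^ N := by
    have h1 := geom_sum_mul x N
    have h2 : S * (1 - x) = -(S * (x - 1)) := by noncomm_ring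
    rw [h2, hS, h1, neg_sub]
  set PSI2 : (J →₀ ℤ) →ₗ[ℤ] (ι →₀ ℤ) := S ∘ₗ PSI with hPSI2def
  have hPSI2 : ∀ i, PSI2 (m i) = Finsupp.single i 1 - (x ^ N) (Finsupp.single i 1) := by
    intro i
    have h1 : PSI (m i) = (1 - x) (Finsupp.single i 1) := by
      rw [ht i, LinearMap.sub_apply, Module.End.one_apply, hx, LinearMap.smul_apply, hT,
        Finsupp.linearCombination_single, one_smul]
      rw [neg_smul]
      abel
    show S (PSI (m i)) = _
    rw [h1, ← Module.End.mul_apply, hgeom, LinearMap.sub_apply, Module.End.one_apply]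
  set gC : (ι →₀ ℤ) →ₗ[ℤ] ↥C := Finsupp.linearCombination ℤ (fun i => (⟨c i, hc i⟩ : ↥C))
    with hgC
  have hfC0 : ∀ i, gC (PSI2 (m i)) = ⟨c i, hc i⟩ := by
    intro i
    rw [hPSI2 i, map_sub]
    have h1 : gC (Finsupp.single i 1) = ⟨c i, hc i⟩ := by
      rw [hgC, Finsupp.linearCombination_single, one_smul]
    have h2 : gC ((x ^ N) (Finsupp.single i 1)) = 0 := by
      have hxN : x ^ N = ((-(r:ℤ)) ^ N) • (T ^ N) := by
        rw [hx, smul_pow]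
      rw [hxN, LinearMap.smul_apply, map_smul]
      set y := gC ((T ^ N) (Finsupp.single i 1)) with hy
      have hNy : (N:ℤ) • y = 0 := by
        have h4 : N • (y : A) = 0 := hNC (y : A) y.2
        apply Subtype.ext
        push_cast
        rw [natCast_zsmul]
        exact h4
      have hdvd2 : (N:ℤ) ∣ (-(r:ℤ))^N := by
        have h5 : ((N:ℕ):ℤ) ∣ ((r^N : ℕ):ℤ) := Int.natCast_dvd_natCast.mpr (nat_dvd_radical_pow hNne)
        have h6 : (-(r:ℤ))^N = (-1)^N * ((r^N : ℕ) : ℤ) := by push_cast; ring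
        rw [h6]
        exact Dvd.dvd.mul_left h5 _
      obtain ⟨w2, hw2⟩ := hdvd2
      rw [hw2, mul_comm, mul_zsmul, hNy, smul_zero]
    rw [h1, h2, sub_zero]
  ---------------------------------------------------------------- D part
  have hBaer : Module.Baer ℤ ↥D := by
    intro I g
    obtain ⟨n, hI⟩ : ∃ n : ℤ, I = Ideal.span {n} :=
      ⟨Submodule.IsPrincipal.generator I, (Ideal.span_singleton_generator I).symm⟩
    subst hI
    by_cases hn0 : n = 0
    · subst hn0
      refine ⟨0, fun z hz => ?_⟩
      obtain ⟨w, hw⟩ := Ideal.mem_span_singleton'.mp hz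
      have hz0 : z = 0 := by rw [← hw]; ring
      have h7 : (⟨z, hz⟩ : Ideal.span ({(0:ℤ)} : Set ℤ)) = 0 := Subtype.ext hz0
      rw [h7, map_zero, LinearMap.zero_apply]
    · have hmem : n ∈ Ideal.span {n} := Submodule.mem_span_singleton_self n
      obtain ⟨e, heD, he⟩ :=
        hDdiv (g ⟨n, hmem⟩ : A) (g ⟨n, hmem⟩).2 n.natAbs (Int.natAbs_pos.mpr hn0)
      have hex : ∃ eh : ↥D, n • eh = g ⟨n, hmem⟩ := by
        rcases le_or_gt 0 n with hpos | hneg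
        · refine ⟨⟨e, heD⟩, Subtype.ext ?_⟩
          have h8 : ((n • (⟨e, heD⟩ : ↥D) : ↥D) : A) = n • e := by push_cast; rfl
          have h9 : n • e = n.natAbs • e := by
            conv_lhs => rw [← Int.natAbs_of_nonneg hpos]
            rw [natCast_zsmul]
          rw [h8, h9]
          exact he
        · refine ⟨-⟨e, heD⟩, Subtype.ext ?_⟩
          have h8 : ((n • (-⟨e, heD⟩ : ↥D) : ↥D) : A) = (-n) • e := by
            push_cast
            rw [smul_neg, ← neg_zsmul]
          have h9 : (-n) • e = n.natAbs • e := by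
            conv_lhs => rw [← Int.ofNat_natAbs_of_nonpos hneg.le]
            rw [natCast_zsmul]
          rw [h8, h9]
          exact he
      obtain ⟨eh, heh⟩ := hex
      refine ⟨LinearMap.toSpanSingleton ℤ ↥D eh, fun z hz => ?_⟩
      obtain ⟨w, hw⟩ := Ideal.mem_span_singleton'.mp hz
      have h9 : (⟨z, hz⟩ : Ideal.span ({n} : Set ℤ)) = w • ⟨n, hmem⟩ := by
        apply Subtype.ext
        rw [SetLike.val_smul, smul_eq_mul, hw]
      calc LinearMap.toSpanSingleton ℤ ↥D eh z = z • eh :=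
            LinearMap.toSpanSingleton_apply ℤ ↥D eh z
        _ = (w * n) • eh := by rw [hw]
        _ = w • (n • eh) := mul_smul w n eh
        _ = w • g ⟨n, hmem⟩ := by rw [heh]
        _ = g (w • ⟨n, hmem⟩) := (map_smul g w _).symm
        _ = g ⟨z, hz⟩ := by rw [← h9]
  haveI hInjD : Module.Injective ℤ ↥D := hBaer.injective
  set Tm : (ι →₀ ℤ) →ₗ[ℤ] (J →₀ ℤ) := Finsupp.linearCombination ℤ m with hTm
  have hTmInj : Function.Injective Tm := zIndep m hm
  set eqI := (ULift.moduleEquiv : ULift.{u} (ι →₀ ℤ) ≃ₗ[ℤ] (ι →₀ ℤ)) with heqI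
  set eqJ := (ULift.moduleEquiv : ULift.{u} (J →₀ ℤ) ≃ₗ[ℤ] (J →₀ ℤ)) with heqJ
  set F : ULift.{u} (ι →₀ ℤ) →ₗ[ℤ] ULift.{u} (J →₀ ℤ) :=
    (eqJ.symm.toLinearMap) ∘ₗ (Tm ∘ₗ eqI.toLinearMap) with hF
  have hFinj : Function.Injective F := by
    intro z1 z2 hz
    simp only [hF, LinearMap.coe_comp, Function.comp_apply, LinearEquiv.coe_coe] at hz
    exact eqI.injective (hTmInj (eqJ.symm.injective hz))
  set gD : ULift.{u} (ι →₀ ℤ) →ₗ[ℤ] ↥D :=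
    (Finsupp.linearCombination ℤ (fun i => (⟨d i, hd i⟩ : ↥D))) ∘ₗ eqI.toLinearMap with hgD
  obtain ⟨hExt, hhExt⟩ := Module.Injective.out F hFinj gD
  ---------------------------------------------------------------- assemble
  refine ⟨(C.subtype.comp (gC ∘ₗ PSI2).toAddMonoidHom)
      + (D.subtype.comp ((hExt ∘ₗ eqJ.symm.toLinearMap)).toAddMonoidHom), fun i => ?_⟩
  have hDval : hExt (eqJ.symm (m i)) = ⟨d i, hd i⟩ := by
    have h1 : eqJ.symm (m i) = F (eqI.symm (Finsupp.single i 1)) := by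
      simp only [hF, LinearMap.coe_comp, Function.comp_apply, LinearEquiv.coe_coe]
      rw [LinearEquiv.apply_symm_apply, hTm, Finsupp.linearCombination_single, one_smul]
    rw [h1, hhExt]
    simp only [hgD, LinearMap.coe_comp, Function.comp_apply, LinearEquiv.coe_coe]
    rw [LinearEquiv.apply_symm_apply, Finsupp.linearCombination_single, one_smul]
  simp only [AddMonoidHom.add_apply, AddMonoidHom.coe_comp, Function.comp_apply,
    LinearMap.toAddMonoidHom_coe, LinearMap.coe_comp, LinearEquiv.coe_coe,
    AddSubgroup.coe_subtype]
  rw [hfC0 i, hDval]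
  exact hcd i

/-- projection onto `C` along `D`. -/
lemma exists_proj {A : Type u} [AddCommGroup A] (C D : AddSubgroup A)
    (hinf : C ⊓ D = ⊥) (hsup : C ⊔ D = ⊤) :
    ∃ π : A →+ ↥C, ∀ c : ↥C, π (c : A) = c := by
  classical
  have hdec : ∀ x : A, ∃ c : ↥C, ∃ d ∈ D, (c : A) + d = x := by
    intro x
    have hx : x ∈ C ⊔ D := by rw [hsup]; trivial
    obtain ⟨y, hy, z, hz, hyz⟩ := AddSubgroup.mem_sup.mp hx
    exact ⟨⟨y, hy⟩, z, hz, hyz⟩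
  choose cp dp hdp hsum using hdec
  have huniq : ∀ (c1 c2 : ↥C) (d1 d2 : A), d1 ∈ D → d2 ∈ D →
      (c1:A) + d1 = (c2:A) + d2 → c1 = c2 := by
    intro c1 c2 d1 d2 hd1 hd2 heq
    have hmem : ((c1 : A) - (c2 : A)) ∈ C ⊓ D := by
      refine AddSubgroup.mem_inf.mpr ⟨?_, ?_⟩
      · exact AddSubgroup.sub_mem C c1.2 c2.2
      · have h2 : (c1:A) - (c2:A) = d2 - d1 := by
          have := heq
          abel_nf
          linear_combination (norm := abel) heq
        rw [h2]
        exact AddSubgroup.sub_mem D hd2 hd1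
    rw [hinf, AddSubgroup.mem_bot, sub_eq_zero] at hmem
    exact Subtype.ext hmem
  refine ⟨AddMonoidHom.mk' cp ?_, ?_⟩
  · intro x y
    apply huniq _ _ (dp (x+y)) (dp x + dp y) (hdp _) (AddSubgroup.add_mem D (hdp x) (hdp y))
    rw [hsum (x+y)]
    calc x + y = ((cp x : A) + dp x) + ((cp y : A) + dp y) := by rw [hsum x, hsum y]
      _ = ((cp x + cp y : ↥C) : A) + (dp x + dp y) := by push_cast; abel
  · intro c
    apply huniq _ _ (dp (c:A)) 0 (hdp _) (zero_mem D)
    simp only [AddMonoidHom.mk'_apply]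
    rw [hsum (c:A), add_zero]

/-- the step lemma: in a reduced torsion group, if every `p^e`-multiple of a `p`-torsion
element is a `p^(e+1)`-multiple, then `p^e` kills the `p`-torsion. -/
lemma pStep {G : Type u} [AddCommGroup G]
    (htorsG : ∀ g : G, ∃ M : ℕ, 0 < M ∧ M • g = 0)
    (hred : ∀ B : AddSubgroup G,
      (∀ b ∈ B, ∀ n : ℕ, 0 < n → ∃ c ∈ B, n • c = b) → B = ⊥)
    {p : ℕ} (hp : p.Prime) (e : ℕ)
    (hstepfail : ∀ g ∈ pTors G p, ∃ h : G, p ^ e • g = p ^ (e+1) • h) :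
    ∀ g ∈ pTors G p, p ^ e • g = 0 := by
  classical
  set φ : G →+ G := AddMonoidHom.mk' (fun g => p ^ e • g) (fun a b => smul_add _ a b) with hφ
  set B : AddSubgroup G := (pTors G p).map φ with hB
  have hφapp : ∀ g : G, φ g = p ^ e • g := fun g => rfl
  have hBsub : ∀ b ∈ B, b ∈ pTors G p := by
    rintro b hb
    obtain ⟨g, hg, rfl⟩ := AddSubgroup.mem_map.mp hb
    rw [hφapp]
    exact nsmul_mem hg _
  have hstep2 : ∀ g ∈ pTors G p, ∃ h ∈ pTors G p, p ^ e • g = p ^ (e+1) • h := by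
    intro g hg
    obtain ⟨h, hh⟩ := hstepfail g hg
    obtain ⟨M, hM, hMh⟩ := htorsG h
    set β := M.factorization p with hβ
    set mc := M / p ^ β with hmc
    have hfac : p ^ β * mc = M := Nat.ordProj_mul_ordCompl_eq_self M p
    have hmc0 : ¬ p ∣ mc := Nat.not_dvd_ordCompl hp hM.ne'
    have hmem : mc • h ∈ pTors G p := ⟨β, by rw [← mul_smul, hfac, hMh]⟩
    obtain ⟨j, hj⟩ := hg
    set pj := p ^ j with hpj
    have hco : Nat.Coprime mc pj := Nat.Coprime.pow_right _ ((hp.coprime_iff_not_dvd.mpr hmc0).symm)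
    have hbez := Nat.gcd_eq_gcd_ab mc pj
    rw [hco, Nat.cast_one] at hbez
    refine ⟨(mc.gcdA pj) • (mc • h), pTors_zsmul_mem hmem _, ?_⟩
    calc p ^ e • g = (1:ℤ) • (p ^ e • g) := (one_smul _ _).symm
      _ = ((mc:ℤ) * mc.gcdA pj) • (p ^ e • g) + ((pj:ℤ) * mc.gcdB pj) • (p ^ e • g) := by
          rw [← add_zsmul, ← hbez, one_smul]
      _ = ((mc:ℤ) * mc.gcdA pj) • (p ^ e • g) := by
          have hz : ((pj:ℤ) * mc.gcdB pj) • (p ^ e • g) = 0 := by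
            rw [mul_comm, mul_zsmul, natCast_zsmul, smul_comm pj (p^e) g, hj, smul_zero, smul_zero]
          rw [hz, add_zero]
      _ = (mc.gcdA pj) • (mc • (p ^ (e+1) • h)) := by
          rw [mul_comm, mul_zsmul, natCast_zsmul, hh]
      _ = p ^ (e+1) • ((mc.gcdA pj) • (mc • h)) := by
          rw [smul_comm mc (p^(e+1)) h, smul_comm (mc.gcdA pj) (p^(e+1))]
  have hpdiv : ∀ α : ℕ, ∀ b ∈ B, ∃ z ∈ B, p ^ α • z = b := by
    intro α
    induction α with
    | zero => exact fun b hb => ⟨b, hb, by rw [pow_zero, one_smul]⟩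
    | succ α ih =>
        intro b hb
        obtain ⟨g, hg, rfl⟩ := AddSubgroup.mem_map.mp hb
        obtain ⟨h, hhmem, hh⟩ := hstep2 g hg
        have hb2 : φ g = p • φ h := by
          rw [hφapp, hφapp, hh, ← mul_smul, ← pow_succ']
        obtain ⟨z, hz, hzeq⟩ := ih (φ h) (AddSubgroup.mem_map.mpr ⟨h, hhmem, rfl⟩)
        refine ⟨z, hz, ?_⟩
        rw [pow_succ', mul_smul, hzeq, ← hb2]
  have hdiv : ∀ b ∈ B, ∀ k : ℕ, 0 < k → ∃ z ∈ B, k • z = b := by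
    intro b hb k hk
    set β := k.factorization p with hβ
    set mc := k / p ^ β with hmc
    have hfac : p ^ β * mc = k := Nat.ordProj_mul_ordCompl_eq_self k p
    have hmc0 : ¬ p ∣ mc := Nat.not_dvd_ordCompl hp hk.ne'
    obtain ⟨j, hj⟩ := hBsub b hb
    have hco : Nat.Coprime mc (p ^ j) :=
      Nat.Coprime.pow_right _ ((hp.coprime_iff_not_dvd.mpr hmc0).symm)
    obtain ⟨u, hu⟩ := coprime_smul_div hco hj
    obtain ⟨z, hz, hzeq⟩ := hpdiv β (u • b) (B.zsmul_mem hb u)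
    refine ⟨z, hz, ?_⟩
    rw [← hfac, mul_comm, mul_smul, hzeq, hu]
  have hB0 : B = ⊥ := hred B hdiv
  intro g hg
  have hm : φ g ∈ B := AddSubgroup.mem_map.mpr ⟨g, hg, rfl⟩
  rw [hB0, AddSubgroup.mem_bot] at hm
  rw [← hφapp]
  exact hm

lemma coprime_cancel {G : Type u} [AddCommGroup G] {mc pj : ℕ} (hco : Nat.Coprime mc pj)
    {x : G} (hx : pj • x = 0) {y : G} (heq : mc • x = y) : ∃ u : ℤ, x = u • y := by
  refine ⟨mc.gcdA pj, ?_⟩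
  have hbez := Nat.gcd_eq_gcd_ab mc pj
  rw [hco, Nat.cast_one] at hbez
  calc x = (1:ℤ) • x := (one_smul _ _).symm
    _ = ((mc:ℤ) * mc.gcdA pj) • x + ((pj:ℤ) * mc.gcdB pj) • x := by
        rw [← add_zsmul, ← hbez, one_smul]
    _ = ((mc:ℤ) * mc.gcdA pj) • x := by
        have hz : ((pj:ℤ) * mc.gcdB pj) • x = 0 := by
          rw [mul_comm, mul_zsmul, natCast_zsmul, hx, smul_zero]
        rw [hz, add_zero]
    _ = (mc.gcdA pj) • y := by rw [mul_comm, mul_zsmul, natCast_zsmul, heq]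

lemma chain_solution {A : Type u} [AddCommGroup A] {C : AddSubgroup A}
    (π : A →+ ↥C) (hπ : ∀ c : ↥C, π (c : A) = c)
    (hsolv : ∀ (ι J : Type) (mm : ι → (J →₀ ℤ)),
        (∀ q : ℕ, q.Prime → LinearIndependent (ZMod q) (fun i => modRed q (mm i))) →
        ∀ a : ι → A, ∃ f : (J →₀ ℤ) →+ A, ∀ i, f (mm i) = a i)
    (n : ℕ → ℕ) (a : ℕ → ↥C) :
    ∃ s : ↥C, ∀ k : ℕ, ∃ z : ↥C,
      s = (∑ i ∈ Finset.range k, (∏ j ∈ Finset.range i, n j) • a i)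
          + (∏ j ∈ Finset.range k, n j) • z := by
  set m : ℕ → (ℕ →₀ ℤ) := fun k => Finsupp.single k 1 - Finsupp.single (k+1) ((n k : ℤ))
    with hm
  have hind : ∀ q : ℕ, q.Prime → LinearIndependent (ZMod q) (fun k => modRed q (m k)) := by
    intro q hq
    have h1 := chainIndep (R := ZMod q) (fun k => ((n k : ℤ) : ZMod q))
    have h2 : (fun k => modRed q (m k))
        = fun k => (Finsupp.single k 1
            - Finsupp.single (k+1) (((n k : ℤ) : ZMod q)) : ℕ →₀ ZMod q) := by
      funext k
      rw [hm]
      rw [modRed_sub, modRed_single, modRed_single]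
      norm_num
    rw [h2]
    exact h1
  obtain ⟨f, hf⟩ := hsolv ℕ ℕ m hind (fun k => (a k : A))
  set y : ℕ → ↥C := fun k => π (f (Finsupp.single k 1)) with hy
  have hrel : ∀ k, y k = a k + n k • y (k+1) := by
    intro k
    have h2 : f (Finsupp.single k 1) - (n k : ℤ) • f (Finsupp.single (k+1) 1) = (a k : A) := by
      rw [← map_zsmul, ← map_sub]
      rw [show Finsupp.single k (1:ℤ) - (n k : ℤ) • Finsupp.single (k+1) (1:ℤ) = m k from by
        rw [hm, Finsupp.smul_single, smul_eq_mul, mul_one]]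
      exact hf k
    have h3 := congrArg π h2
    rw [map_sub, map_zsmul, hπ, natCast_zsmul] at h3
    simp only [hy]
    rw [← h3]
    abel
  refine ⟨y 0, fun k => ⟨y k, ?_⟩⟩
  induction k with
  | zero => simp
  | succ k ih =>
      rw [Finset.sum_range_succ, Finset.prod_range_succ, ih, hrel k, smul_add, ← mul_smul]
      abel

lemma case1 {G : Type u} [AddCommGroup G]
    (htorsG : ∀ g : G, ∃ M : ℕ, 0 < M ∧ M • g = 0)
    (hred : ∀ B : AddSubgroup G,
      (∀ b ∈ B, ∀ n : ℕ, 0 < n → ∃ c ∈ B, n • c = b) → B = ⊥)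
    (hchain : ∀ (n : ℕ → ℕ) (a : ℕ → G), ∃ s : G, ∀ k : ℕ, ∃ z : G,
        s = (∑ i ∈ Finset.range k, (∏ j ∈ Finset.range i, n j) • a i)
            + (∏ j ∈ Finset.range k, n j) • z)
    {p : ℕ} (hp : p.Prime)
    (hub : ∀ e : ℕ, ∃ g ∈ pTors G p, p ^ e • g ≠ 0) : False := by
  classical
  have hstep : ∀ e : ℕ, ∃ g, g ∈ pTors G p ∧ ∀ h : G, p ^ e • g ≠ p ^ (e+1) • h := by
    intro e
    by_contra hcontra
    push_neg at hcontra
    have h0 : ∀ g ∈ pTors G p, ∃ h : G, p ^ e • g = p ^ (e+1) • h := by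
      intro g hg
      exact hcontra g hg
    have h1 := pStep htorsG hred hp e h0
    obtain ⟨g, hg, hne⟩ := hub e
    exact hne (h1 g hg)
  choose w hw1 hw2 using hstep
  have hO : ∀ nn : ℕ, ∃ j, p ^ j • w nn = 0 := fun nn => hw1 nn
  choose O hOw using hO
  set W : ℕ → ℕ := fun k => Nat.rec 0 (fun k Wk => max Wk (O (Wk + 2*k) - k)) k with hW
  have hWsucc : ∀ k, W (k+1) = max (W k) (O (W k + 2*k) - k) := fun k => rfl
  have hWmono : Monotone W :=
    monotone_nat_of_le_succ (fun k => by rw [hWsucc]; exact le_max_left _ _)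
  set idx : ℕ → ℕ := fun k => W k + 2*k with hidx
  set cc : ℕ → G := fun k => w (idx k) with hcc
  obtain ⟨s, hs⟩ := hchain (fun _ => p) cc
  obtain ⟨M, hM, hMs⟩ := htorsG s
  set ae := M.factorization p with hae
  set mco := M / p ^ ae with hmco
  have hfacM : p ^ ae * mco = M := Nat.ordProj_mul_ordCompl_eq_self M p
  have hmco0 : ¬ p ∣ mco := Nat.not_dvd_ordCompl hp hM.ne'
  set k := ae with hk
  obtain ⟨z, hz⟩ := hs (k+1)
  have hQ : ∀ i : ℕ, (∏ _j ∈ Finset.range i, p) = p ^ i :=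
    fun i => by rw [Finset.prod_const, Finset.card_range]
  simp only [hQ] at hz
  set mult := mco * p ^ (ae + W k) with hmult
  have h1 : mult • s = 0 := by
    have hmm : mult = p ^ (W k) * M := by rw [hmult, ← hfacM]; ring
    rw [hmm, mul_smul, hMs, smul_zero]
  have h2 : ∀ i, i < k → mult • (p ^ i • cc i) = 0 := by
    intro i hik
    have hWk : O (idx i) ≤ W k + i := by
      have h3 : O (idx i) - i ≤ W (i+1) := by rw [hWsucc]; exact le_max_right _ _
      have h4 : W (i+1) ≤ W k := hWmono (Nat.succ_le_of_lt hik)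
      omega
    have h5 : mult • (p ^ i • cc i)
        = (mco * p ^ (ae + W k + i - O (idx i))) • (p ^ (O (idx i)) • cc i) := by
      rw [← mul_smul, ← mul_smul]
      have hexp : ae + W k + i - O (idx i) + O (idx i) = ae + W k + i := by omega
      have hmm : mult * p ^ i = mco * p ^ (ae + W k + i - O (idx i)) * p ^ (O (idx i)) := by
        rw [hmult, mul_assoc, ← pow_add, mul_assoc, ← pow_add, hexp]
      rw [hmm]
    rw [h5]
    simp only [hcc]
    rw [hOw (idx i), smul_zero]
  have h6 := congrArg (fun t => mult • t) hz
  simp only [smul_add, Finset.smul_sum] at h6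
  rw [Finset.sum_range_succ] at h6
  rw [Finset.sum_eq_zero (fun i hi => h2 i (Finset.mem_range.mp hi))] at h6
  rw [h1, zero_add] at h6
  -- h6 : 0 = mult • (p ^ k • cc k) + mult • (p ^ (k+1) • z)
  have e1 : mult • (p ^ k • cc k) = mco • (p ^ (idx k) • cc k) := by
    rw [← mul_smul, ← mul_smul]
    have hmm : mult * p ^ k = mco * p ^ (idx k) := by
      rw [hmult, mul_assoc, ← pow_add]
      have hee : ae + W k + k = idx k := by simp only [hidx]; omega
      rw [hee]
    rw [hmm]
  have e2 : mult • (p ^ (k+1) • z) = mco • (p ^ (idx k + 1) • z) := by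
    rw [← mul_smul, ← mul_smul]
    have hmm : mult * p ^ (k+1) = mco * p ^ (idx k + 1) := by
      rw [hmult, mul_assoc, ← pow_add]
      have hee : ae + W k + (k + 1) = idx k + 1 := by simp only [hidx]; omega
      rw [hee]
    rw [hmm]
  rw [e1, e2] at h6
  have h6' : mco • (p ^ (idx k) • cc k) + mco • (p ^ (idx k + 1) • z) = 0 := h6.symm
  have h7 : mco • (p ^ (idx k) • cc k) = mco • (p ^ (idx k + 1) • (-z)) := by
    rw [smul_neg, smul_neg]
    exact eq_neg_of_add_eq_zero_left h6'
  -- cancel mco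
  have hco : Nat.Coprime mco (p ^ (O (idx k))) :=
    Nat.Coprime.pow_right _ ((hp.coprime_iff_not_dvd.mpr hmco0).symm)
  have hx : (p ^ (O (idx k))) • (p ^ (idx k) • cc k) = 0 := by
    rw [smul_comm]
    simp only [hcc]
    rw [hOw (idx k), smul_zero]
  obtain ⟨u, hu⟩ := coprime_cancel hco hx h7
  -- hu : p ^ (idx k) • cc k = u • (mco • (p ^ (idx k + 1) • (-z)))
  apply hw2 (idx k) (u • (mco • (-z)))
  simp only [hcc] at hu
  rw [hu]
  rw [smul_comm mco (p ^ (idx k + 1)), smul_comm u (p ^ (idx k + 1))]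

lemma case2 {G : Type u} [AddCommGroup G]
    (htorsG : ∀ g : G, ∃ M : ℕ, 0 < M ∧ M • g = 0)
    (hchain : ∀ (n : ℕ → ℕ) (a : ℕ → G), ∃ s : G, ∀ k : ℕ, ∃ z : G,
        s = (∑ i ∈ Finset.range k, (∏ j ∈ Finset.range i, n j) • a i)
            + (∏ j ∈ Finset.range k, n j) • z)
    (seqp : ℕ → ℕ) (hprime : ∀ k, (seqp k).Prime) (hmono : StrictMono seqp)
    (ebnd : ℕ → ℕ)
    (hkill : ∀ k, ∀ g ∈ pTors G (seqp k), (seqp k) ^ (ebnd k) • g = 0)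
    (cw : ℕ → G) (hcw1 : ∀ k, cw k ∈ pTors G (seqp k)) (hcw2 : ∀ k, cw k ≠ 0) : False := by
  classical
  set o : ℕ → ℕ := fun k => (seqp k) ^ (ebnd k) with ho
  obtain ⟨s, hs⟩ := hchain o cw
  obtain ⟨M, hM, hMs⟩ := htorsG s
  set k := M + 1 with hk
  set p := seqp k with hpdef
  have hpk : M < p := lt_of_lt_of_le (by omega) (hmono.le_apply)
  have hpM : ¬ p ∣ M := fun hdvd => absurd (Nat.le_of_dvd hM hdvd) (by omega)
  set Q : ℕ → ℕ := fun i => ∏ j ∈ Finset.range i, o j with hQ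
  obtain ⟨z, hz⟩ := hs (k+1)
  have hdie : ∀ i, i < k → (M * Q k) • (Q i • cw i) = 0 := by
    intro i hik
    obtain ⟨R, hR⟩ : o i ∣ Q k := Finset.dvd_prod_of_mem _ (Finset.mem_range.mpr hik)
    have hoi : o i • cw i = 0 := hkill i (cw i) (hcw1 i)
    rw [← mul_smul, hR, show M * (o i * R) * Q i = (M * R * Q i) * o i from by ring,
      mul_smul, hoi, smul_zero]
  have h6 := congrArg (fun t => (M * Q k) • t) hz
  simp only [smul_add, Finset.smul_sum] at h6
  rw [Finset.sum_range_succ] at h6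
  rw [Finset.sum_eq_zero (fun i hi => hdie i (Finset.mem_range.mp hi))] at h6
  have hls : (M * Q k) • s = 0 := by rw [mul_comm, mul_smul, hMs, smul_zero]
  rw [hls, zero_add] at h6
  -- h6 : 0 = (M * Q k) • (Q k • cw k) + (M * Q k) • (Q (k+1) • z)
  set m1 := M * Q k * Q k with hm1
  have e1 : (M * Q k) • (Q k • cw k) = m1 • cw k := by rw [← mul_smul, hm1]
  have e2 : (M * Q k) • (Q (k+1) • z) = o k • (m1 • z) := by
    rw [← mul_smul, ← mul_smul]
    have hmm : M * Q k * Q (k+1) = o k * m1 := by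
      have hQs : Q (k+1) = Q k * o k := Finset.prod_range_succ o k
      rw [hQs, hm1]
      ring
    rw [hmm, mul_smul]
  rw [e1, e2] at h6
  set zz := -(m1 • z) with hzz
  have heq : m1 • cw k = o k • zz := by
    rw [hzz, smul_neg]
    exact eq_neg_of_add_eq_zero_left h6.symm
  have hQknd : ¬ p ∣ Q k := by
    intro hdvd
    rw [hQ] at hdvd
    obtain ⟨i, hi, hdvd2⟩ := ((Nat.Prime.prime (hprime k)).dvd_finset_prod_iff _).mp hdvd
    have h8 : p ∣ seqp i := (hprime k).dvd_of_dvd_pow hdvd2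
    have h9 : p = seqp i := (Nat.prime_dvd_prime_iff_eq (hprime k) (hprime i)).mp h8
    have h10 : seqp i < seqp k := hmono (Finset.mem_range.mp hi)
    rw [hpdef] at h9
    omega
  have hm1nd : ¬ p ∣ m1 := by
    rw [hm1]
    intro hdvd
    rcases ((Nat.Prime.dvd_mul (hprime k)).mp hdvd) with h | h
    · rcases ((Nat.Prime.dvd_mul (hprime k)).mp h) with h' | h'
      · exact hpM h'
      · exact hQknd h'
    · exact hQknd h
  obtain ⟨Mz, hMz, hMzz⟩ := htorsG zz
  set βz := Mz.factorization p with hβz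
  set mcz := Mz / p ^ βz with hmcz
  have hfacz : p ^ βz * mcz = Mz := Nat.ordProj_mul_ordCompl_eq_self Mz p
  have hmcz0 : ¬ p ∣ mcz := Nat.not_dvd_ordCompl (hprime k) hMz.ne'
  have hmemz : mcz • zz ∈ pTors G p := ⟨βz, by rw [← mul_smul, hfacz, hMzz]⟩
  have hkillz : o k • (mcz • zz) = 0 := hkill k _ hmemz
  have hfinal : (mcz * m1) • cw k = 0 := by
    rw [mul_smul, heq, smul_comm, hkillz]
  obtain ⟨j, hj⟩ := hcw1 k
  have hcof : Nat.Coprime (mcz * m1) (p ^ j) := by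
    apply Nat.Coprime.pow_right
    have h1 : ¬ p ∣ mcz * m1 := by
      intro hdvd
      rcases (Nat.Prime.dvd_mul (hprime k)).mp hdvd with h | h
      · exact hmcz0 h
      · exact hm1nd h
    exact ((hprime k).coprime_iff_not_dvd.mpr h1).symm
  exact hcw2 k (coprime_smul_kill hcof hfinal hj)

lemma bounded_of_solvable {A : Type u} [AddCommGroup A]
    (htors : ∀ a : A, ∃ n : ℕ, 0 < n ∧ n • a = 0)
    (C D : AddSubgroup A) (hinf : C ⊓ D = ⊥) (hsup : C ⊔ D = ⊤)
    (hCred : ∀ B : AddSubgroup C,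
      (∀ b ∈ B, ∀ n : ℕ, 0 < n → ∃ c ∈ B, n • c = b) → B = ⊥)
    (hsolv : ∀ (ι J : Type) (m : ι → (J →₀ ℤ)),
        (∀ q : ℕ, q.Prime →
          LinearIndependent (ZMod q) (fun i => modRed q (m i))) →
        ∀ a : ι → A, ∃ f : (J →₀ ℤ) →+ A, ∀ i, f (m i) = a i) :
    ∃ N : ℕ, 1 ≤ N ∧ ∀ c ∈ C, N • c = 0 := by
  classical
  obtain ⟨π, hπ⟩ := exists_proj C D hinf hsup
  have htorsG : ∀ g : ↥C, ∃ M : ℕ, 0 < M ∧ M • g = 0 := by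
    intro g
    obtain ⟨nn, hn, hng⟩ := htors (g : A)
    refine ⟨nn, hn, Subtype.ext ?_⟩
    push_cast
    exact hng
  have hchain : ∀ (n : ℕ → ℕ) (a : ℕ → ↥C), ∃ s : ↥C, ∀ k : ℕ, ∃ z : ↥C,
      s = (∑ i ∈ Finset.range k, (∏ j ∈ Finset.range i, n j) • a i)
          + (∏ j ∈ Finset.range k, n j) • z :=
    fun n a => chain_solution π hπ hsolv n a
  by_contra hcon
  push_neg at hcon
  have hcon' : ∀ N : ℕ, 1 ≤ N → ∃ c ∈ C, N • c ≠ 0 := hcon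
  by_cases hcase : ∃ p : ℕ, p.Prime ∧ ∀ e : ℕ, ∃ g ∈ pTors ↥C p, p ^ e • g ≠ 0
  · obtain ⟨p, hp, hub⟩ := hcase
    exact case1 htorsG hCred hchain hp hub
  · push_neg at hcase
    -- hcase : ∀ p, p.Prime → ∃ e, ∀ g ∈ pTors ↥C p, p ^ e • g = 0
    have hkillex : ∀ p : ℕ, ∃ e : ℕ, p.Prime → ∀ g ∈ pTors ↥C p, p ^ e • g = 0 := by
      intro p
      by_cases hp : p.Prime
      · obtain ⟨e, he⟩ := hcase p hp
        exact ⟨e, fun _ => he⟩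
      · exact ⟨0, fun h => absurd h hp⟩
    choose ebnd hebnd using hkillex
    have hinfp : ∀ B : ℕ, ∃ p, p.Prime ∧ B < p ∧ ∃ g, g ∈ pTors ↥C p ∧ g ≠ 0 := by
      intro B
      by_contra hB
      push_neg at hB
      set S := (Finset.range (B+1)).filter Nat.Prime with hS
      have hSprime : ∀ p ∈ S, p.Prime := fun p hp => (Finset.mem_filter.mp hp).2
      set E := (S.sup ebnd) + 1 with hE
      set NN := (∏ p ∈ S, p) ^ E with hNN
      have hNN1 : 1 ≤ NN := by
        rw [hNN]
        apply Nat.one_le_iff_ne_zero.mpr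
        exact pow_ne_zero _ (Finset.prod_ne_zero_iff.mpr (fun p hp => (hSprime p hp).pos.ne'))
      have hkey : ∀ M : ℕ, 0 < M → ∀ g : ↥C, M • g = 0 → NN • g = 0 := by
        intro M
        induction M using Nat.strong_induction_on with
        | _ M ih =>
          intro hM g hMg
          by_cases hc1 : ∃ p, p.Prime ∧ p ∣ M ∧ B < p
          · obtain ⟨p, hpp, hpd, hpB⟩ := hc1
            have h1 : (M / p) • g ∈ pTors ↥C p :=
              ⟨1, by rw [pow_one, ← mul_smul, Nat.mul_div_cancel' hpd, hMg]⟩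
            have h2 : (M / p) • g = 0 := hB p hpp hpB _ h1
            have h3 : M / p < M := Nat.div_lt_self hM hpp.one_lt
            have h4 : 0 < M / p := Nat.div_pos (Nat.le_of_dvd hM hpd) hpp.pos
            exact ih _ h3 h4 g h2
          · by_cases hc2 : ∃ p, p.Prime ∧ p ∣ M ∧ ebnd p < M.factorization p
            · obtain ⟨p, hpp, hpd, hpe⟩ := hc2
              have hfac : p ^ (M.factorization p) * (M / p ^ (M.factorization p)) = M :=
                Nat.ordProj_mul_ordCompl_eq_self M p
              have h1 : (M / p ^ (M.factorization p)) • g ∈ pTors ↥C p :=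
                ⟨M.factorization p, by rw [← mul_smul, hfac, hMg]⟩
              have h2 : (p ^ ebnd p * (M / p ^ (M.factorization p))) • g = 0 := by
                rw [mul_smul]
                exact hebnd p hpp _ h1
              have hmcpos : 0 < M / p ^ (M.factorization p) := Nat.ordCompl_pos p hM.ne'
              have h3 : p ^ ebnd p * (M / p ^ (M.factorization p)) < M := by
                conv_rhs => rw [← hfac]
                exact (Nat.mul_lt_mul_right hmcpos).mpr (Nat.pow_lt_pow_right hpp.one_lt hpe)
              exact ih _ h3 (Nat.mul_pos (pow_pos hpp.pos _) hmcpos) g h2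
            · push_neg at hc1 hc2
              have hMdvd : M ∣ NN := by
                rw [hNN]
                apply dvd_prod_pow S hSprime E hM.ne'
                · intro p hpp hpd
                  refine Finset.mem_filter.mpr ⟨Finset.mem_range.mpr ?_, hpp⟩
                  have := hc1 p hpp hpd
                  omega
                · intro p
                  by_cases hpp : p.Prime
                  · by_cases hpd : p ∣ M
                    · have h5 : M.factorization p ≤ ebnd p := hc2 p hpp hpd
                      have h6 : p ∈ S := Finset.mem_filter.mpr
                        ⟨Finset.mem_range.mpr (by have := hc1 p hpp hpd; omega), hpp⟩
                      have h7 : ebnd p ≤ S.sup ebnd := Finset.le_sup h6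
                      omega
                    · rw [Nat.factorization_eq_zero_of_not_dvd hpd]; omega
                  · rw [Nat.factorization_eq_zero_of_not_prime _ hpp]; omega
              obtain ⟨t, ht⟩ := hMdvd
              rw [ht, mul_comm, mul_smul, hMg, smul_zero]
      obtain ⟨c0, hc0C, hc0⟩ := hcon' NN hNN1
      obtain ⟨M, hM, hMc⟩ := htorsG ⟨c0, hc0C⟩
      have hz := hkey M hM ⟨c0, hc0C⟩ hMc
      apply hc0
      have hz2 := congrArg (Subtype.val) hz
      push_cast at hz2
      exact hz2
    choose F hF1 hF2 g0 hg1 hg2 using hinfp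
    set seqp : ℕ → ℕ := fun k => Nat.rec (F 0) (fun _ pk => F pk) k with hseqp
    have hseqS : ∀ k, seqp (k+1) = F (seqp k) := fun _ => rfl
    have hsp : ∀ k, (seqp k).Prime := by
      intro k
      cases k with
      | zero => exact hF1 0
      | succ k => rw [hseqS]; exact hF1 _
    have hsm : StrictMono seqp :=
      strictMono_nat_of_lt_succ (fun k => by rw [hseqS]; exact hF2 _)
    set cw : ℕ → ↥C := fun k => Nat.rec (g0 0) (fun k _ => g0 (seqp k)) k with hcw
    have hcw1 : ∀ k, cw k ∈ pTors ↥C (seqp k) := by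
      intro k
      cases k with
      | zero => exact hg1 0
      | succ k => exact hg1 (seqp k)
    have hcw2 : ∀ k, cw k ≠ 0 := by
      intro k
      cases k with
      | zero => exact hg2 0
      | succ k => exact hg2 (seqp k)
    exact case2 htorsG hchain seqp hsp hsm (fun k => ebnd (seqp k))
      (fun k g hg => hebnd (seqp k) (hsp k) g hg) cw hcw1 hcw2

/-- A periodic abelian group `A = C ⊕ D` (`D` divisible, `C` reduced) contains
solutions of all unimodular systems of equations over itself if and only if
its reduced part `C` has bounded period. -/
theorem periodic_abelian_unimodular_criterion
    {A : Type*} [AddCommGroup A]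
    (htors : ∀ a : A, ∃ n : ℕ, 0 < n ∧ n • a = 0)
    (C D : AddSubgroup A) (hinf : C ⊓ D = ⊥) (hsup : C ⊔ D = ⊤)
    (hDdiv : ∀ d ∈ D, ∀ n : ℕ, 0 < n → ∃ e ∈ D, n • e = d)
    (hCred : ∀ B : AddSubgroup C,
      (∀ b ∈ B, ∀ n : ℕ, 0 < n → ∃ c ∈ B, n • c = b) → B = ⊥) :
    (∀ (ι J : Type) (m : ι → (J →₀ ℤ)),
        (∀ q : ℕ, q.Prime →
          LinearIndependent (ZMod q) (fun i => modRed q (m i))) →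
        ∀ a : ι → A, ∃ f : (J →₀ ℤ) →+ A, ∀ i, f (m i) = a i) ↔
      ∃ N : ℕ, 1 ≤ N ∧ ∀ c ∈ C, N • c = 0 := by
  constructor
  · intro hsolv
    exact bounded_of_solvable htors C D hinf hsup hCred hsolv
  · rintro ⟨N, hN, hNC⟩ ι J m hm a
    exact solvable_of_bounded C D hsup hDdiv hN hNC ι J m hm a
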